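/- Let T be a diagonal operator on ℓ²({1,...,n}) with distinct diagonal entries u₁,...,uₙ, let D be a diagonal operator on ℓᵖ (1 < p < ∞), let β ≥ 1, and let L : ℓ²({1,...,n}) → ℓᵖ satisfy (1/β)‖x‖ ≤ ‖Lx‖ ≤ β‖x‖ for all x. Let ε = minᵢ≠ⱼ|uᵢ − uⱼ|. Then (1/β)√n ≤ (2/ε)‖DL − LT‖·n + β·n^{1/p} and (1/β)n^{1/p} ≤ (4/ε)‖DL − LT‖·n + β·√n. -/

import Mathlib

open scoped ENNReal

/-- Membership in `lp` is monotone under pointwise norm domination (finite exponent). -/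
lemma stmt7_memℓp_mono {q : ℝ≥0∞} [Fact (1 ≤ q)] (hq : 0 < q.toReal) {f g : ℕ → ℂ}
    (hf : Memℓp f q) (h : ∀ j, ‖g j‖ ≤ ‖f j‖) : Memℓp g q := by
  apply memℓp_gen
  refine Summable.of_nonneg_of_le (fun j => Real.rpow_nonneg (norm_nonneg _) _)
    (fun j => Real.rpow_le_rpow (norm_nonneg _) (h j) hq.le) (hf.summable hq)

/-- Norm comparison in `lp` from a pointwise scaled domination. -/
lemma stmt7_norm_le {q : ℝ≥0∞} [Fact (1 ≤ q)] (hq : 0 < q.toReal) (F G : lp (fun _ : ℕ => ℂ) q)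
    {c : ℝ} (hc : 0 ≤ c) (h : ∀ j, ‖F j‖ ≤ c * ‖G j‖) : ‖F‖ ≤ c * ‖G‖ := by
  refine (Real.rpow_le_rpow_iff (norm_nonneg F) (mul_nonneg hc (norm_nonneg G)) hq).mp ?_
  rw [lp.norm_rpow_eq_tsum hq F]
  have h1 : ∑' j, ‖F j‖ ^ q.toReal ≤ ∑' j, (c * ‖G j‖) ^ q.toReal := by
    refine Summable.tsum_le_tsum (fun j => Real.rpow_le_rpow (norm_nonneg _) (h j) hq.le)
      ((lp.memℓp F).summable hq) ?_
    have : (fun j => (c * ‖G j‖) ^ q.toReal) = fun j => c ^ q.toReal * ‖G j‖ ^ q.toReal := by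
      funext j; rw [Real.mul_rpow hc (norm_nonneg _)]
    rw [this]
    exact ((lp.memℓp G).summable hq).mul_left _
  refine h1.trans_eq ?_
  have : (fun j => (c * ‖G j‖) ^ q.toReal) = fun j => c ^ q.toReal * ‖G j‖ ^ q.toReal := by
    funext j; rw [Real.mul_rpow hc (norm_nonneg _)]
  rw [this, tsum_mul_left, ← lp.norm_rpow_eq_tsum hq G, Real.mul_rpow hc (norm_nonneg _)]

/-- `p`-th power of the norm of a sum of disjointly supported `lp` elements. -/
lemma stmt7_disjoint_sum {q : ℝ≥0∞} [Fact (1 ≤ q)] (hq : 0 < q.toReal) {n : ℕ}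
    (H : Fin n → lp (fun _ : ℕ => ℂ) q)
    (hdisj : ∀ j (i i' : Fin n), H i j ≠ 0 → H i' j ≠ 0 → i = i') :
    ‖∑ i, H i‖ ^ q.toReal = ∑ i, ‖H i‖ ^ q.toReal := by
  rw [lp.norm_rpow_eq_tsum hq]
  have hc : ∀ j, ‖(∑ i, H i : lp (fun _ : ℕ => ℂ) q) j‖ ^ q.toReal
      = ∑ i, ‖H i j‖ ^ q.toReal := by
    intro j
    have hcoe : (∑ i, H i : lp (fun _ : ℕ => ℂ) q) j = ∑ i, H i j := by
      rw [lp.coeFn_sum]; simp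
    rw [hcoe]
    by_cases hex : ∃ i₀, H i₀ j ≠ 0
    · obtain ⟨i₀, hi₀⟩ := hex
      have hz : ∀ i, i ≠ i₀ → H i j = 0 := fun i hi => by
        by_contra h; exact hi (hdisj j i i₀ h hi₀)
      rw [Finset.sum_eq_single i₀ (fun i _ hi => hz i hi) (by simp),
        Finset.sum_eq_single i₀ (fun i _ hi => by
          rw [hz i hi]; simp [Real.zero_rpow hq.ne']) (by simp)]
    · push_neg at hex
      simp [hex, Real.zero_rpow hq.ne']
  rw [tsum_congr hc, Summable.tsum_finsetSum (fun i _ => (lp.memℓp (H i)).summable hq)]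
  exact Finset.sum_congr rfl fun i _ => (lp.norm_rpow_eq_tsum hq (H i)).symm

/-- quantitative incompatibility of a diagonal operator on `ℓ²({1,...,n})` with
distinct entries and a diagonal operator on `ℓᵖ`, through an into-isomorphism `L`. Here
`ε > 0` is a lower bound for the gaps `|uᵢ − uⱼ|`, `i ≠ j` (taking `ε` equal to the minimal
gap recovers the statement verbatim). -/
theorem stmt7 (p : ℝ) (hp : 1 < p) [Fact (1 ≤ ENNReal.ofReal p)]
    (n : ℕ) (hn : 1 ≤ n)
    (u : Fin n → ℂ) (hu : Function.Injective u)
    (T : EuclideanSpace ℂ (Fin n) →L[ℂ] EuclideanSpace ℂ (Fin n))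
    (hT : ∀ (x : EuclideanSpace ℂ (Fin n)) (i : Fin n), T x i = u i * x i)
    (v : ℕ → ℂ)
    (D : lp (fun _ : ℕ => ℂ) (ENNReal.ofReal p) →L[ℂ] lp (fun _ : ℕ => ℂ) (ENNReal.ofReal p))
    (hD : ∀ (x : lp (fun _ : ℕ => ℂ) (ENNReal.ofReal p)) (i : ℕ), D x i = v i * x i)
    (β : ℝ) (hβ : 1 ≤ β)
    (L : EuclideanSpace ℂ (Fin n) →L[ℂ] lp (fun _ : ℕ => ℂ) (ENNReal.ofReal p))
    (hL : ∀ x, (1 / β) * ‖x‖ ≤ ‖L x‖ ∧ ‖L x‖ ≤ β * ‖x‖)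
    (ε : ℝ) (hε : 0 < ε)
    (hsep : ∀ i j, i ≠ j → ε ≤ ‖u i - u j‖) :
    (1 / β) * Real.sqrt n ≤ (2 / ε) * ‖D ∘L L - L ∘L T‖ * n + β * (n : ℝ) ^ (1 / p) ∧
    (1 / β) * (n : ℝ) ^ (1 / p) ≤ (4 / ε) * ‖D ∘L L - L ∘L T‖ * n + β * Real.sqrt n := by
  have hp0 : 0 < p := lt_trans one_pos hp
  have hβ0 : 0 < β := lt_of_lt_of_le one_pos hβ
  have hqt : (ENNReal.ofReal p).toReal = p := ENNReal.toReal_ofReal hp0.le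
  have hq0 : 0 < (ENNReal.ofReal p).toReal := by rw [hqt]; exact hp0
  set δ := ‖D ∘L L - L ∘L T‖ with hδdef
  have hδ0 : 0 ≤ δ := norm_nonneg _
  set e : Fin n → EuclideanSpace ℂ (Fin n) := fun i => EuclideanSpace.single i 1 with he
  have hee : ∀ i, ‖e i‖ = 1 := fun i => by simp [he]
  set f : Fin n → lp (fun _ : ℕ => ℂ) (ENNReal.ofReal p) := fun i => L (e i) with hf
  set w : Fin n → lp (fun _ : ℕ => ℂ) (ENNReal.ofReal p) :=
    fun i => (D ∘L L - L ∘L T) (e i) with hw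
  have hTe : ∀ i, T (e i) = u i • e i := by
    intro i; ext k
    rw [hT]
    by_cases hk : k = i
    · subst hk; simp [he, EuclideanSpace.single_apply]
    · simp [he, EuclideanSpace.single_apply, hk]
  have hwcoord : ∀ i j, (w i : ℕ → ℂ) j = (v j - u i) * (f i : ℕ → ℂ) j := by
    intro i j
    have h1 : w i = D (f i) - L (T (e i)) := by simp [hw, hf]
    rw [h1, hTe i, map_smul]
    have h2 : ((D (f i) - u i • L (e i) : lp (fun _ : ℕ => ℂ) (ENNReal.ofReal p)) : ℕ → ℂ) j
        = D (f i) j - (u i • L (e i) : lp (fun _ : ℕ => ℂ) (ENNReal.ofReal p)) j := by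
      rw [lp.coeFn_sub]; rfl
    rw [h2, hD, lp.coeFn_smul]
    simp only [Pi.smul_apply, smul_eq_mul, hf]
    ring
  have hwnorm : ∀ i, ‖w i‖ ≤ δ := by
    intro i
    calc ‖w i‖ ≤ δ * ‖e i‖ := (D ∘L L - L ∘L T).le_opNorm (e i)
    _ = δ := by rw [hee i, mul_one]
  -- the separation sets
  set J : Fin n → Set ℕ := fun i => {j | ‖v j - u i‖ < ε / 2} with hJ
  have hdisjJ : ∀ j (i i' : Fin n), j ∈ J i → j ∈ J i' → i = i' := by
    intro j i i' hi hi'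
    by_contra hne
    have hs := hsep i i' hne
    have h1 : ‖u i - u i'‖ ≤ ‖v j - u i'‖ + ‖v j - u i‖ := by
      have h2 : u i - u i' = (v j - u i') - (v j - u i) := by ring
      rw [h2]; exact norm_sub_le _ _
    have hi2 : ‖v j - u i‖ < ε / 2 := hi
    have hi2' : ‖v j - u i'‖ < ε / 2 := hi'
    linarith
  have hmemg : ∀ i, Memℓp ((J i)ᶜ.indicator (f i)) (ENNReal.ofReal p) := fun i =>
    stmt7_memℓp_mono hq0 (lp.memℓp (f i)) (fun j => norm_indicator_le_norm_self _ _)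
  have hmemh : ∀ i, Memℓp ((J i).indicator (f i)) (ENNReal.ofReal p) := fun i =>
    stmt7_memℓp_mono hq0 (lp.memℓp (f i)) (fun j => norm_indicator_le_norm_self _ _)
  set G : Fin n → lp (fun _ : ℕ => ℂ) (ENNReal.ofReal p) := fun i => ⟨_, hmemg i⟩ with hG
  set H : Fin n → lp (fun _ : ℕ => ℂ) (ENNReal.ofReal p) := fun i => ⟨_, hmemh i⟩ with hH
  have hGapp : ∀ i j, (G i : ℕ → ℂ) j = (J i)ᶜ.indicator (f i) j := fun i j => rfl
  have hHapp : ∀ i j, (H i : ℕ → ℂ) j = (J i).indicator (f i) j := fun i j => rfl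
  have hGHf : ∀ i, H i + G i = f i := by
    intro i
    ext j
    rw [lp.coeFn_add, Pi.add_apply, hGapp, hHapp]
    exact congrFun (Set.indicator_self_add_compl (J i) (f i)) j
  have h2ε : (0 : ℝ) ≤ 2 / ε := by positivity
  have hGnorm : ∀ i, ‖G i‖ ≤ 2 / ε * δ := by
    intro i
    have hpt : ∀ j, ‖(G i : ℕ → ℂ) j‖ ≤ 2 / ε * ‖(w i : ℕ → ℂ) j‖ := by
      intro j
      rw [hGapp]
      by_cases hj : j ∈ J i
      · rw [Set.indicator_of_notMem (by simpa using hj)]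
        simp only [norm_zero]
        positivity
      · rw [Set.indicator_of_mem (by simpa using hj)]
        have hjε : ε / 2 ≤ ‖v j - u i‖ := not_lt.mp hj
        rw [hwcoord i j, norm_mul]
        have hfn : (0 : ℝ) ≤ ‖(f i : ℕ → ℂ) j‖ := norm_nonneg _
        calc ‖(f i : ℕ → ℂ) j‖ = 2 / ε * (ε / 2 * ‖(f i : ℕ → ℂ) j‖) := by
              field_simp
          _ ≤ 2 / ε * (‖v j - u i‖ * ‖(f i : ℕ → ℂ) j‖) := by gcongr
    exact (stmt7_norm_le hq0 (G i) (w i) h2ε hpt).trans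
      (mul_le_mul_of_nonneg_left (hwnorm i) h2ε)
  have hfub : ∀ i, ‖f i‖ ≤ β := by
    intro i
    have := (hL (e i)).2
    rwa [hee i, mul_one] at this
  have hHub : ∀ i, ‖H i‖ ≤ β := by
    intro i
    have hpt : ∀ j, ‖(H i : ℕ → ℂ) j‖ ≤ 1 * ‖(f i : ℕ → ℂ) j‖ := by
      intro j; rw [one_mul, hHapp]; exact norm_indicator_le_norm_self _ _
    have := stmt7_norm_le hq0 (H i) (f i) zero_le_one hpt
    rw [one_mul] at this
    exact this.trans (hfub i)
  have hflb : ∀ i, 1 / β ≤ ‖f i‖ := by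
    intro i
    have := (hL (e i)).1
    rwa [hee i, mul_one] at this
  have hHlb : ∀ i, 1 / β - 2 / ε * δ ≤ ‖H i‖ := by
    intro i
    have h1 : ‖f i‖ ≤ ‖H i‖ + ‖G i‖ := by
      rw [← hGHf i]; exact norm_add_le _ _
    have := hGnorm i
    have := hflb i
    linarith
  have hdisjH : ∀ j (i i' : Fin n), (H i : ℕ → ℂ) j ≠ 0 → (H i' : ℕ → ℂ) j ≠ 0 → i = i' := by
    intro j i i' h1 h2
    refine hdisjJ j i i' ?_ ?_
    · by_contra hj; exact h1 (by rw [hHapp]; exact Set.indicator_of_notMem hj _)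
    · by_contra hj; exact h2 (by rw [hHapp]; exact Set.indicator_of_notMem hj _)
  -- the all-ones vector
  set X : EuclideanSpace ℂ (Fin n) := (WithLp.equiv 2 _).symm (fun _ => (1 : ℂ)) with hX
  have hXapp : ∀ j, X j = 1 := fun j => rfl
  have hXnorm : ‖X‖ = Real.sqrt n := by
    rw [EuclideanSpace.norm_eq]
    simp [hXapp]
  have hXsum : X = ∑ i, e i := by
    ext j
    have hsumapp : (∑ i, e i : EuclideanSpace ℂ (Fin n)) j = ∑ i, (e i) j :=
      by rw [WithLp.ofLp_sum]; exact Finset.sum_apply j Finset.univ _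
    rw [hXapp, hsumapp]
    simp [he, EuclideanSpace.single_apply]
  have hLX : L X = ∑ i, f i := by rw [hXsum, map_sum]
  have hsplit : L X = (∑ i, H i) + ∑ i, G i := by
    rw [hLX, ← Finset.sum_add_distrib]
    exact Finset.sum_congr rfl fun i _ => (hGHf i).symm
  have hSkey : ‖∑ i, H i‖ ^ p = ∑ i, ‖H i‖ ^ p := by
    have := stmt7_disjoint_sum hq0 H hdisjH
    rwa [hqt] at this
  have hGsum : ‖∑ i, G i‖ ≤ 2 / ε * δ * n := by
    calc ‖∑ i, G i‖ ≤ ∑ i, ‖G i‖ := norm_sum_le _ _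
      _ ≤ ∑ _i : Fin n, 2 / ε * δ := Finset.sum_le_sum fun i _ => hGnorm i
      _ = 2 / ε * δ * n := by
          rw [Finset.sum_const, Finset.card_univ, Fintype.card_fin, nsmul_eq_mul]; ring
  have hnp : (0 : ℝ) ≤ (n : ℝ) ^ (1 / p) := Real.rpow_nonneg (Nat.cast_nonneg n) _
  have hn1 : (1 : ℝ) ≤ (n : ℝ) := by exact_mod_cast hn
  have hnple : (n : ℝ) ^ (1 / p) ≤ (n : ℝ) := by
    calc (n : ℝ) ^ (1 / p) ≤ (n : ℝ) ^ (1 : ℝ) :=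
          Real.rpow_le_rpow_of_exponent_le hn1 (by rw [div_le_one hp0]; linarith)
      _ = (n : ℝ) := Real.rpow_one _
  have hcancel : ((n : ℝ) ^ (1 / p)) ^ p = (n : ℝ) := by
    rw [← Real.rpow_mul (Nat.cast_nonneg n), one_div_mul_cancel hp0.ne', Real.rpow_one]
  have hSupper : ‖∑ i, H i‖ ≤ β * (n : ℝ) ^ (1 / p) := by
    refine (Real.rpow_le_rpow_iff (norm_nonneg _) (by positivity) hp0).mp ?_
    rw [hSkey]
    calc ∑ i, ‖H i‖ ^ p ≤ ∑ _i : Fin n, β ^ p :=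
          Finset.sum_le_sum fun i _ => Real.rpow_le_rpow (norm_nonneg _) (hHub i) hp0.le
      _ = (n : ℝ) * β ^ p := by
          rw [Finset.sum_const, Finset.card_univ, Fintype.card_fin, nsmul_eq_mul]
      _ = (β * (n : ℝ) ^ (1 / p)) ^ p := by
          rw [Real.mul_rpow hβ0.le hnp, hcancel]; ring
  constructor
  · -- first inequality
    have h1 : 1 / β * ‖X‖ ≤ ‖L X‖ := (hL X).1
    rw [hXnorm] at h1
    have h2 : ‖L X‖ ≤ ‖∑ i, H i‖ + ‖∑ i, G i‖ := by
      rw [hsplit]; exact norm_add_le _ _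
    linarith
  · -- second inequality
    by_cases hcase : 1 / β - 2 / ε * δ ≤ 0
    · have h1 : 1 / β * (n : ℝ) ^ (1 / p) ≤ 2 / ε * δ * (n : ℝ) ^ (1 / p) :=
        mul_le_mul_of_nonneg_right (by linarith) hnp
      have h2 : 2 / ε * δ * (n : ℝ) ^ (1 / p) ≤ 2 / ε * δ * n :=
        mul_le_mul_of_nonneg_left hnple (by positivity)
      have h3 : 2 / ε * δ * n ≤ 4 / ε * δ * n := by
        have hdiv : (2 : ℝ) / ε ≤ 4 / ε := by
          rw [div_le_div_iff_of_pos_right hε]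
          norm_num
        exact mul_le_mul_of_nonneg_right
          (mul_le_mul_of_nonneg_right hdiv hδ0) (Nat.cast_nonneg n)
      have h4 : 0 ≤ β * Real.sqrt n := by positivity
      linarith
    · push_neg at hcase
      have hclb : (0 : ℝ) ≤ 1 / β - 2 / ε * δ := hcase.le
      have hSlower : (n : ℝ) ^ (1 / p) * (1 / β - 2 / ε * δ) ≤ ‖∑ i, H i‖ := by
        refine (Real.rpow_le_rpow_iff (by positivity) (norm_nonneg _) hp0).mp ?_
        rw [hSkey]
        calc ((n : ℝ) ^ (1 / p) * (1 / β - 2 / ε * δ)) ^ p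
            = (n : ℝ) * (1 / β - 2 / ε * δ) ^ p := by
              rw [Real.mul_rpow hnp hclb, hcancel]
          _ = ∑ _i : Fin n, (1 / β - 2 / ε * δ) ^ p := by
              rw [Finset.sum_const, Finset.card_univ, Fintype.card_fin, nsmul_eq_mul]
          _ ≤ ∑ i, ‖H i‖ ^ p :=
              Finset.sum_le_sum fun i _ => Real.rpow_le_rpow hclb (hHlb i) hp0.le
      have hSup2 : ‖∑ i, H i‖ ≤ β * Real.sqrt n + 2 / ε * δ * n := by
        have hS : (∑ i, H i) = L X - ∑ i, G i := eq_sub_of_add_eq hsplit.symm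
        rw [hS]
        refine (norm_sub_le _ _).trans ?_
        have h2 : ‖L X‖ ≤ β * Real.sqrt n := by
          have := (hL X).2; rwa [hXnorm] at this
        linarith
      have h5 : (n : ℝ) ^ (1 / p) * (2 / ε * δ) ≤ 2 / ε * δ * n := by
        calc (n : ℝ) ^ (1 / p) * (2 / ε * δ) = 2 / ε * δ * (n : ℝ) ^ (1 / p) := by ring
          _ ≤ 2 / ε * δ * n := mul_le_mul_of_nonneg_left hnple (by positivity)
      calc 1 / β * (n : ℝ) ^ (1 / p)
          = (n : ℝ) ^ (1 / p) * (1 / β - 2 / ε * δ) + (n : ℝ) ^ (1 / p) * (2 / ε * δ) := by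
            ring
        _ ≤ ‖∑ i, H i‖ + 2 / ε * δ * n := add_le_add hSlower h5
        _ ≤ (β * Real.sqrt n + 2 / ε * δ * n) + 2 / ε * δ * n := add_le_add_left hSup2 _
        _ = 4 / ε * δ * n + β * Real.sqrt n := by ring
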